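/- Let H:[N]→[M] be a uniformly random hash function from a 2-universal family 𝓗, and let X = (X_1,...,X_T) be a block K-source over [N]^T, independent of H, with K > MT/ε² for some ε > 0. Then the joint distribution (H, H(X_1),...,H(X_T)) is ε-close in statistical distance to (H, U_{[M]^T}), where U_{[M]^T} is uniform on [M]^T and independent of H. -/

import Mathlib

open Finset

lemma aux_log (p q : ℝ) (hp : 0 ≤ p) (hq : 0 < q) :
    (Real.sqrt p - Real.sqrt q)^2 ≤ p * Real.log (p/q) - p + q := by
  rcases eq_or_lt_of_le hp with h | hp0
  · subst h
    have : Real.sqrt q ^ 2 = q := Real.sq_sqrt hq.le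
    simp only [Real.sqrt_zero]
    nlinarith
  · have hsp : 0 < Real.sqrt p := Real.sqrt_pos.2 hp0
    have hsq : 0 < Real.sqrt q := Real.sqrt_pos.2 hq
    have hpp : Real.sqrt p ^ 2 = p := Real.sq_sqrt hp
    have hqq : Real.sqrt q ^ 2 = q := Real.sq_sqrt hq.le
    have hs : Real.sqrt (p/q) = Real.sqrt p / Real.sqrt q := Real.sqrt_div hp q
    have h1 : Real.log (p/q) = 2 * Real.log (Real.sqrt (p/q)) := by
      rw [Real.log_sqrt (by positivity)]; ring
    have h2 : Real.log (Real.sqrt (p/q)) ≥ 1 - 1/Real.sqrt (p/q) := by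
      have hs0 : 0 < Real.sqrt (p/q) := by rw [hs]; positivity
      have := Real.log_le_sub_one_of_pos (show (0:ℝ) < 1/Real.sqrt (p/q) by positivity)
      rw [Real.log_div one_ne_zero (ne_of_gt hs0), Real.log_one] at this
      linarith
    have hinv : 1/Real.sqrt (p/q) = Real.sqrt q / Real.sqrt p := by
      rw [hs]; field_simp
    rw [hinv] at h2
    have key : p * Real.log (p/q) ≥ 2*p - 2*(Real.sqrt p * Real.sqrt q) := by
      have h3 : Real.log (p/q) ≥ 2 - 2*(Real.sqrt q / Real.sqrt p) := by
        rw [h1]; linarith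
      have h4 : p * (Real.sqrt q / Real.sqrt p) = Real.sqrt p * Real.sqrt q := by
        field_simp
        nlinarith
      nlinarith [mul_le_mul_of_nonneg_left h3 hp]
    nlinarith

lemma aux_update_sum {M T : ℕ} (ii : Fin T) (Ψ : (Fin T → Fin M) → Fin M → ℝ)
    (hΨ : ∀ y v w, Ψ (Function.update y ii v) w = Ψ y w) :
    (M:ℝ) * ∑ y : Fin T → Fin M, Ψ y (y ii) = ∑ y : Fin T → Fin M, ∑ v : Fin M, Ψ y v := by
  let e : ((Fin T → Fin M) × Fin M) ≃ ((Fin T → Fin M) × Fin M) :=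
    { toFun := fun yv => (Function.update yv.1 ii yv.2, yv.1 ii)
      invFun := fun zu => (Function.update zu.1 ii zu.2, zu.1 ii)
      left_inv := by
        intro yv
        simp [Function.update_idem, Function.update_self, Function.update_eq_self]
      right_inv := by
        intro yv
        simp [Function.update_idem, Function.update_self, Function.update_eq_self] }
  have h1 : ∑ yv : ((Fin T → Fin M) × Fin M), Ψ yv.1 yv.2
      = ∑ yv : ((Fin T → Fin M) × Fin M), Ψ (e yv).1 (e yv).2 :=
    (Equiv.sum_comp e (fun z => Ψ z.1 z.2)).symm
  have h2 : ∀ yv : ((Fin T → Fin M) × Fin M), Ψ (e yv).1 (e yv).2 = Ψ yv.1 (yv.1 ii) := by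
    intro yv
    show Ψ (Function.update yv.1 ii yv.2) (yv.1 ii) = _
    rw [hΨ]
  rw [Fintype.sum_prod_type] at h1
  simp only [h2] at h1
  rw [Fintype.sum_prod_type] at h1
  simp only [Finset.sum_const, Finset.card_univ, Fintype.card_fin, nsmul_eq_mul] at h1
  rw [Finset.mul_sum]
  exact h1.symm

lemma aux_logsum {M : ℕ} (A : Fin M → ℝ) (hA : ∀ v, 0 ≤ A v)
    (hB : 0 < ∑ v, A v) :
    ∑ v, A v * Real.log (A v) ≤ (∑ v, A v) * Real.log (∑ v, A v)
      - (∑ v, A v) * Real.log M - (∑ v, A v) + (M * ∑ v, (A v)^2) / (∑ v, A v) := by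
  set B := ∑ v, A v with hBdef
  have hM : 0 < M := by
    rcases Nat.eq_zero_or_pos M with h | h
    · exfalso; subst h; rw [hBdef] at hB; simp at hB
    · exact h
  have key : ∀ v, A v * Real.log (A v) - A v * Real.log B + A v * Real.log M
      ≤ (M * (A v)^2) / B - A v := by
    intro v
    rcases eq_or_lt_of_le (hA v) with h | h
    · rw [← h]; simp
    · have hx : (0:ℝ) < A v * M / B := by positivity
      have hlog : Real.log (A v * M / B) ≤ A v * M / B - 1 := Real.log_le_sub_one_of_pos hx
      have hexp : Real.log (A v * M / B) = Real.log (A v) + Real.log M - Real.log B := by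
        rw [Real.log_div (by positivity) (ne_of_gt hB), Real.log_mul (ne_of_gt h) (by positivity)]
      rw [hexp] at hlog
      have := mul_le_mul_of_nonneg_left hlog (hA v)
      have hq : A v * (A v * M / B) = M * (A v)^2 / B := by ring
      nlinarith
  have hsum := Finset.sum_le_sum (fun v (_ : v ∈ Finset.univ) => key v)
  simp only [Finset.sum_sub_distrib, Finset.sum_add_distrib, ← Finset.sum_mul,
    ← Finset.mul_sum] at hsum
  rw [← hBdef] at hsum
  have h2 : ∑ v, M * (A v)^2 / B = (M * ∑ v, (A v)^2)/B := by
    rw [Finset.mul_sum, Finset.sum_div]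
  rw [h2] at hsum
  linarith

lemma aux_cnt_aux {M T : ℕ} (d : ℕ) : ∀ i, i + d = T → ∀ c : Fin T → Fin M,
    ∑ y : Fin T → Fin M, (if (∀ j : Fin T, (j:ℕ) < i → c j = y j) then (1:ℝ) else 0)
      = (M:ℝ)^d := by
  induction d with
  | zero =>
    intro i hi c
    have h1 : ∀ y : Fin T → Fin M, (∀ j : Fin T, (j:ℕ) < i → c j = y j) ↔ c = y := by
      intro y
      constructor
      · intro h; funext j; exact h j (by have := j.2; omega)
      · intro h j _; rw [h]
    rw [Finset.sum_congr rfl (fun y _ => by rw [if_congr (h1 y) rfl rfl])]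
    rw [Finset.sum_ite_eq Finset.univ c (fun _ => (1:ℝ))]
    simp
  | succ n ih =>
    intro i hi c
    have hiT : i < T := by omega
    set ii : Fin T := ⟨i, hiT⟩ with hii
    have key := aux_update_sum ii
      (fun y v => if (∀ j : Fin T, (j:ℕ) < i → c j = y j) ∧ c ii = v then (1:ℝ) else 0)
      (by
        intro y v w
        refine if_congr (and_congr_left fun _ => ?_) rfl rfl
        constructor
        · intro h j hj
          have hne : j ≠ ii := by intro hEq; rw [hEq] at hj; simp [hii] at hj
          have := h j hj
          rwa [Function.update_of_ne hne] at this
        · intro h j hj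
          have hne : j ≠ ii := by intro hEq; rw [hEq] at hj; simp [hii] at hj
          rw [Function.update_of_ne hne]
          exact h j hj)
    have lhs_eq : ∀ y : Fin T → Fin M,
        (if (∀ j : Fin T, (j:ℕ) < i → c j = y j) ∧ c ii = y ii then (1:ℝ) else 0)
        = (if (∀ j : Fin T, (j:ℕ) < i + 1 → c j = y j) then (1:ℝ) else 0) := by
      intro y
      refine if_congr ?_ rfl rfl
      constructor
      · rintro ⟨h1, h2⟩ j hj
        rcases Nat.lt_succ_iff_lt_or_eq.1 hj with h | h
        · exact h1 j h
        · have : j = ii := by apply Fin.ext; exact h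
          rw [this]; exact h2
      · intro h
        exact ⟨fun j hj => h j (by omega), h ii (by simp [hii])⟩
    have rhs_eq : ∀ y : Fin T → Fin M,
        (∑ v : Fin M, if (∀ j : Fin T, (j:ℕ) < i → c j = y j) ∧ c ii = v then (1:ℝ) else 0)
        = (if (∀ j : Fin T, (j:ℕ) < i → c j = y j) then (1:ℝ) else 0) := by
      intro y
      by_cases h : (∀ j : Fin T, (j:ℕ) < i → c j = y j)
      · rw [Finset.sum_congr rfl (fun v _ => by rw [if_congr (and_iff_right h) rfl rfl])]
        rw [Finset.sum_ite_eq Finset.univ (c ii) (fun _ => (1:ℝ))]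
        simp only [Finset.mem_univ, if_true]
        rw [if_pos h]
      · simp [h]
    simp only [lhs_eq] at key
    simp only [rhs_eq] at key
    rw [ih (i+1) (by omega) c] at key
    rw [← key, pow_succ]
    ring

lemma aux_cnt {M T : ℕ} (i : ℕ) (hi : i ≤ T) (c : Fin T → Fin M) :
    ∑ y : Fin T → Fin M, (if (∀ j : Fin T, (j:ℕ) < i → c j = y j) then (1:ℝ) else 0)
      = (M:ℝ)^(T-i) :=
  aux_cnt_aux (T - i) i (by omega) c

section
variable {N M T : ℕ} {Hfam : Type} [Fintype Hfam]

def Gfun (hash : Hfam → Fin N → Fin M) (p : (Fin T → Fin N) → ℝ) (i : ℕ)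
    (h : Hfam) (y : Fin T → Fin M) : ℝ :=
  ∑ x, if (∀ j : Fin T, (j:ℕ) < i → hash h (x j) = y j) then p x else 0

def Afun (hash : Hfam → Fin N → Fin M) (p : (Fin T → Fin N) → ℝ) (ii : Fin T)
    (h : Hfam) (y : Fin T → Fin M) (v : Fin M) : ℝ :=
  ∑ x, if (∀ j : Fin T, (j:ℕ) < (ii:ℕ) → hash h (x j) = y j) ∧ hash h (x ii) = v then p x else 0

set_option linter.unusedSectionVars false

variable (hash : Hfam → Fin N → Fin M) (p : (Fin T → Fin N) → ℝ)

lemma Gfun_nonneg (hp0 : ∀ x, 0 ≤ p x) (i : ℕ) (h : Hfam) (y : Fin T → Fin M) :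
    0 ≤ Gfun hash p i h y :=
  Finset.sum_nonneg (fun x _ => by split
                                   · exact hp0 x
                                   · exact le_refl 0)

lemma Afun_nonneg (hp0 : ∀ x, 0 ≤ p x) (ii : Fin T) (h : Hfam) (y : Fin T → Fin M) (v : Fin M) :
    0 ≤ Afun hash p ii h y v :=
  Finset.sum_nonneg (fun x _ => by split
                                   · exact hp0 x
                                   · exact le_refl 0)

lemma Gfun_sum (hp1 : ∑ x, p x = 1) (i : ℕ) (hi : i ≤ T) (h : Hfam) :
    ∑ y : Fin T → Fin M, Gfun hash p i h y = (M:ℝ)^(T-i) := by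
  unfold Gfun
  rw [Finset.sum_comm]
  have hx : ∀ x : Fin T → Fin N,
      ∑ y : Fin T → Fin M, (if (∀ j : Fin T, (j:ℕ) < i → hash h (x j) = y j) then p x else 0)
      = p x * (M:ℝ)^(T-i) := by
    intro x
    have h1 : ∀ y : Fin T → Fin M,
        (if (∀ j : Fin T, (j:ℕ) < i → hash h (x j) = y j) then p x else 0)
        = p x * (if (∀ j : Fin T, (j:ℕ) < i → hash h (x j) = y j) then (1:ℝ) else 0) := by
      intro y; split <;> ring
    rw [Finset.sum_congr rfl (fun y _ => h1 y), ← Finset.mul_sum,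
      aux_cnt i hi (fun j => hash h (x j))]
  rw [Finset.sum_congr rfl (fun x _ => hx x), ← Finset.sum_mul, hp1, one_mul]

lemma Afun_sum (ii : Fin T) (h : Hfam) (y : Fin T → Fin M) :
    ∑ v, Afun hash p ii h y v = Gfun hash p (ii:ℕ) h y := by
  unfold Afun Gfun
  rw [Finset.sum_comm]
  refine Finset.sum_congr rfl (fun x _ => ?_)
  by_cases hc : (∀ j : Fin T, (j:ℕ) < (ii:ℕ) → hash h (x j) = y j)
  · rw [Finset.sum_congr rfl (fun v _ => by rw [if_congr (and_iff_right hc) rfl rfl]),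
      Finset.sum_ite_eq Finset.univ (hash h (x ii)) (fun _ => p x)]
    simp only [Finset.mem_univ, if_true]
    rw [if_pos hc]
  · rw [if_neg hc]
    refine Finset.sum_eq_zero (fun v _ => ?_)
    rw [if_neg (fun hh => hc hh.1)]

lemma Gfun_succ (ii : Fin T) (h : Hfam) (y : Fin T → Fin M) :
    Gfun hash p ((ii:ℕ)+1) h y = Afun hash p ii h y (y ii) := by
  unfold Afun Gfun
  refine Finset.sum_congr rfl (fun x _ => ?_)
  refine if_congr ?_ rfl rfl
  constructor
  · intro hc
    exact ⟨fun j hj => hc j (by omega), hc ii (by omega)⟩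
  · rintro ⟨h1, h2⟩ j hj
    rcases Nat.lt_succ_iff_lt_or_eq.1 hj with hlt | heq
    · exact h1 j hlt
    · have : j = ii := Fin.ext heq
      rw [this]; exact h2

lemma Afun_update (ii : Fin T) (h : Hfam) (y : Fin T → Fin M) (v w : Fin M) :
    Afun hash p ii h (Function.update y ii v) w = Afun hash p ii h y w := by
  unfold Afun
  refine Finset.sum_congr rfl (fun x _ => ?_)
  refine if_congr (and_congr_left fun _ => ?_) rfl rfl
  constructor
  · intro hc j hj
    have hne : j ≠ ii := by intro hEq; rw [hEq] at hj; omega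
    have := hc j hj
    rwa [Function.update_of_ne hne] at this
  · intro hc j hj
    have hne : j ≠ ii := by intro hEq; rw [hEq] at hj; omega
    rw [Function.update_of_ne hne]
    exact hc j hj

lemma aux_MS (ii : Fin T) (h : Hfam) :
    (M:ℝ) * ∑ y : Fin T → Fin M,
        Gfun hash p ((ii:ℕ)+1) h y * Real.log (Gfun hash p ((ii:ℕ)+1) h y)
      = ∑ y : Fin T → Fin M, ∑ v : Fin M,
        Afun hash p ii h y v * Real.log (Afun hash p ii h y v) := by
  have := aux_update_sum ii
    (fun y v => Afun hash p ii h y v * Real.log (Afun hash p ii h y v))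
    (fun y v w => by simp only [Afun_update])
  rw [← this]
  congr 1
  refine Finset.sum_congr rfl (fun y _ => ?_)
  rw [Gfun_succ]

end

lemma aux_phi {N M : ℕ} {Hfam : Type} [Fintype Hfam]
    (hash : Hfam → Fin N → Fin M)
    (huniv : ∀ x x' : Fin N, x ≠ x' →
      (∑ hh : Hfam, if hash hh x = hash hh x' then (1 : ℝ) else 0)
        / Fintype.card Hfam ≤ 1 / M)
    (hDpos : (0:ℝ) < Fintype.card Hfam)
    (hM : 0 < M) (K : ℝ) (hK0 : 0 < K)
    (m : Fin N → ℝ) (hm0 : ∀ a, 0 ≤ m a) (w : ℝ) (hw : ∑ a, m a = w)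
    (hblk : w ≠ 0 → (∑ a, (m a)^2)/w^2 ≤ 1/K) :
    ∑ h : Hfam, (∑ v, (∑ a, if hash h a = v then m a else 0)^2) / w^2
      ≤ (Fintype.card Hfam : ℝ) * (1/K + 1/M) := by
  set Dr : ℝ := (Fintype.card Hfam : ℝ) with hDr
  by_cases hw0 : w = 0
  · have : ∀ h : Hfam, (∑ v, (∑ a, if hash h a = v then m a else 0)^2) / w^2 = 0 := by
      intro h; rw [hw0]; norm_num
    rw [Finset.sum_congr rfl (fun h _ => this h), Finset.sum_const]
    simp only [smul_zero]
    positivity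
  · have hwpos : 0 < w := lt_of_le_of_ne (hw ▸ Finset.sum_nonneg (fun a _ => hm0 a)) (Ne.symm hw0)
    have step1 : ∀ h : Hfam, ∑ v, (∑ a, if hash h a = v then m a else 0)^2
        = ∑ a, ∑ b, (if hash h a = hash h b then m a * m b else 0) := by
      intro h
      have expand : ∀ v : Fin M, (∑ a, if hash h a = v then m a else 0)^2
          = ∑ a, ∑ b, ((if hash h a = v then m a else 0) * (if hash h b = v then m b else 0)) := by
        intro v
        rw [pow_two, Finset.sum_mul_sum]
      rw [Finset.sum_congr rfl (fun v _ => expand v)]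
      rw [Finset.sum_comm]
      refine Finset.sum_congr rfl (fun a _ => ?_)
      rw [Finset.sum_comm]
      refine Finset.sum_congr rfl (fun b _ => ?_)
      by_cases heq : hash h a = hash h b
      · have hterm : ∀ v, (if hash h a = v then m a else 0) * (if hash h b = v then m b else 0)
            = (if hash h a = v then m a * m b else 0) := by
          intro v; rw [← heq]; split_ifs <;> ring
        rw [Finset.sum_congr rfl (fun v _ => hterm v),
          Finset.sum_ite_eq Finset.univ (hash h a) (fun _ => m a * m b)]
        simp [heq]
      · rw [if_neg heq]
        refine Finset.sum_eq_zero (fun v _ => ?_)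
        by_cases h1 : hash h a = v
        · have h3 : ¬ (hash h b = v) := fun h2 => heq (h1.trans h2.symm)
          rw [if_pos h1, if_neg h3]; ring
        · rw [if_neg h1]; ring
    have step2 : ∑ h : Hfam, ∑ a, ∑ b, (if hash h a = hash h b then m a * m b else 0)
        = ∑ a, ∑ b, (∑ h : Hfam, if hash h a = hash h b then (1:ℝ) else 0) * (m a * m b) := by
      rw [Finset.sum_comm]
      refine Finset.sum_congr rfl (fun a _ => ?_)
      rw [Finset.sum_comm]
      refine Finset.sum_congr rfl (fun b _ => ?_)
      rw [Finset.sum_mul]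
      refine Finset.sum_congr rfl (fun h _ => ?_)
      split_ifs <;> ring
    have step3 : ∀ a b : Fin N,
        (∑ h : Hfam, if hash h a = hash h b then (1:ℝ) else 0) * (m a * m b)
        ≤ (if a = b then Dr * (m a * m b) else 0) + (Dr/M) * (m a * m b) := by
      intro a b
      have hmm : 0 ≤ m a * m b := mul_nonneg (hm0 a) (hm0 b)
      by_cases hab : a = b
      · have hle : (∑ h : Hfam, if hash h a = hash h b then (1:ℝ) else 0) ≤ Dr := by
          rw [hDr]
          calc (∑ h : Hfam, if hash h a = hash h b then (1:ℝ) else 0)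
              ≤ ∑ h : Hfam, 1 := Finset.sum_le_sum (fun h _ => by split_ifs <;> norm_num)
            _ = (Fintype.card Hfam : ℝ) := by simp
        rw [if_pos hab]
        have h2 : 0 ≤ (Dr/M) * (m a * m b) := by positivity
        nlinarith [mul_le_mul_of_nonneg_right hle hmm]
      · have hle : (∑ h : Hfam, if hash h a = hash h b then (1:ℝ) else 0) ≤ Dr/M := by
          have := huniv a b hab
          rw [div_le_div_iff₀ hDpos (by positivity : (0:ℝ) < M)] at this
          rw [le_div_iff₀ (by positivity : (0:ℝ) < (M:ℝ))]
          linarith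
        rw [if_neg hab, zero_add]
        exact mul_le_mul_of_nonneg_right hle hmm
    have step4 : ∑ a, ∑ b, ((if a = b then Dr * (m a * m b) else 0) + (Dr/M) * (m a * m b))
        = Dr * (∑ a, (m a)^2) + (Dr/M) * w^2 := by
      rw [Finset.sum_congr rfl (fun a (_ : a ∈ Finset.univ) => Finset.sum_add_distrib)]
      rw [Finset.sum_add_distrib]
      congr 1
      · rw [Finset.mul_sum]
        refine Finset.sum_congr rfl (fun a _ => ?_)
        rw [Finset.sum_ite_eq Finset.univ a (fun b => Dr * (m a * m b))]
        simp [pow_two]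
      · have h5 : ∑ a, ∑ b, (Dr/(M:ℝ)) * (m a * m b) = (Dr/(M:ℝ)) * ((∑ a, m a) * (∑ a, m a)) := by
          rw [Finset.sum_mul_sum, Finset.mul_sum]
          exact Finset.sum_congr rfl (fun a _ => by rw [Finset.mul_sum])
        rw [h5, hw]
        ring
    have hmain : ∑ h : Hfam, ∑ v, (∑ a, if hash h a = v then m a else 0)^2
        ≤ Dr * (∑ a, (m a)^2) + (Dr/M) * w^2 := by
      rw [Finset.sum_congr rfl (fun h _ => step1 h), step2, ← step4]
      exact Finset.sum_le_sum (fun a _ => Finset.sum_le_sum (fun b _ => step3 a b))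
    have hsum2 : ∑ a, (m a)^2 ≤ w^2 / K := by
      have := hblk hw0
      rw [div_le_div_iff₀ (by positivity) hK0] at this
      rw [le_div_iff₀ hK0]
      linarith
    rw [← Finset.sum_div]
    rw [div_le_iff₀ (by positivity : (0:ℝ) < w^2)]
    have hfin : Dr * (1/K + 1/M) * w^2 = Dr * (w^2/K) + (Dr/M)*w^2 := by
      field_simp
    rw [hfin]
    have : Dr * (∑ a, (m a)^2) ≤ Dr * (w^2/K) := by
      apply mul_le_mul_of_nonneg_left hsum2 (le_of_lt hDpos)
    linarith [hmain]
section arep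
variable {N M T : ℕ} {Hfam : Type} [Fintype Hfam]

lemma aux_rho2 (hash : Hfam → Fin N → Fin M) (p : (Fin T → Fin N) → ℝ)
    (margLeVal : Fin T → (Fin T → Fin N) → Fin N → ℝ)
    (hmargLeVal : ∀ i x v, margLeVal i x v =
      ∑ y, if (∀ j, j < i → y j = x j) ∧ y i = v then p y else 0)
    (ii : Fin T) (h : Hfam) (x : Fin T → Fin N) (v : Fin M) :
    (∑ a, if hash h a = v then margLeVal ii x a else 0)
      = ∑ x' : Fin T → Fin N,
          if ((∀ j, j < ii → x' j = x j) ∧ hash h (x' ii) = v) then p x' else 0 := by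
  have h1 : ∀ a : Fin N, (if hash h a = v then margLeVal ii x a else 0)
      = ∑ x' : Fin T → Fin N,
          (if hash h a = v then (if (∀ j, j < ii → x' j = x j) ∧ x' ii = a then p x' else 0) else 0) := by
    intro a
    rw [hmargLeVal ii x a]
    split_ifs with hc
    · rfl
    · exact (Finset.sum_eq_zero (fun x' _ => rfl)).symm
  rw [Finset.sum_congr rfl (fun a _ => h1 a), Finset.sum_comm]
  refine Finset.sum_congr rfl (fun x' _ => ?_)
  have h2 : ∀ a : Fin N,
      (if hash h a = v then (if (∀ j, j < ii → x' j = x j) ∧ x' ii = a then p x' else 0) else 0)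
      = (if x' ii = a then (if (∀ j, j < ii → x' j = x j) ∧ hash h a = v then p x' else 0) else 0) := by
    intro a
    split_ifs with c1 c2 c3 c4 c5 <;> first | rfl | (exfalso; tauto)
  rw [Finset.sum_congr rfl (fun a _ => h2 a),
    Finset.sum_ite_eq Finset.univ (x' ii) (fun a => (if (∀ j, j < ii → x' j = x j) ∧ hash h a = v then p x' else 0))]
  simp only [Finset.mem_univ, if_true]

lemma aux_wfacts (p : (Fin T → Fin N) → ℝ) (hp0 : ∀ x, 0 ≤ p x)
    (margLt : Fin T → (Fin T → Fin N) → ℝ)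
    (hmargLt : ∀ i x, margLt i x =
      ∑ y, if (∀ j, j < i → y j = x j) then p y else 0)
    (ii : Fin T) (x : Fin T → Fin N) :
    0 ≤ margLt ii x ∧ p x ≤ margLt ii x := by
  constructor
  · rw [hmargLt]
    exact Finset.sum_nonneg (fun y _ => by split_ifs
                                           · exact hp0 y
                                           · exact le_refl 0)
  · rw [hmargLt]
    have := Finset.single_le_sum
      (f := fun y => if (∀ j, j < ii → y j = x j) then p y else 0)
      (fun y (_ : y ∈ Finset.univ) => by split_ifs
                                         · exact hp0 y
                                         · exact le_refl 0)
      (Finset.mem_univ x)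
    simpa using this

lemma aux_winv (p : (Fin T → Fin N) → ℝ)
    (margLt : Fin T → (Fin T → Fin N) → ℝ)
    (hmargLt : ∀ i x, margLt i x =
      ∑ y, if (∀ j, j < i → y j = x j) then p y else 0)
    (ii : Fin T) (x x' : Fin T → Fin N) (hagree : ∀ j, j < ii → x' j = x j) :
    margLt ii x = margLt ii x' := by
  rw [hmargLt, hmargLt]
  refine Finset.sum_congr rfl (fun y _ => ?_)
  refine if_congr ?_ rfl rfl
  constructor
  · intro hc j hj; rw [hagree j hj]; exact hc j hj
  · intro hc j hj; rw [← hagree j hj]; exact hc j hj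

lemma aux_Arep (hash : Hfam → Fin N → Fin M) (p : (Fin T → Fin N) → ℝ) (hp0 : ∀ x, 0 ≤ p x)
    (margLt : Fin T → (Fin T → Fin N) → ℝ)
    (hmargLt : ∀ i x, margLt i x =
      ∑ y, if (∀ j, j < i → y j = x j) then p y else 0)
    (margLeVal : Fin T → (Fin T → Fin N) → Fin N → ℝ)
    (hmargLeVal : ∀ i x v, margLeVal i x v =
      ∑ y, if (∀ j, j < i → y j = x j) ∧ y i = v then p y else 0)
    (ii : Fin T) (h : Hfam) (y : Fin T → Fin M) (v : Fin M) :
    Afun hash p ii h y v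
      = ∑ x, if (∀ j : Fin T, (j:ℕ) < (ii:ℕ) → hash h (x j) = y j)
          then p x * ((∑ a, if hash h a = v then margLeVal ii x a else 0) / margLt ii x)
          else 0 := by
  have step1 : ∀ x, (if (∀ j : Fin T, (j:ℕ) < (ii:ℕ) → hash h (x j) = y j)
        then p x * ((∑ a, if hash h a = v then margLeVal ii x a else 0) / margLt ii x) else 0)
      = ∑ x', (if ((∀ j : Fin T, (j:ℕ) < (ii:ℕ) → hash h (x j) = y j)
            ∧ (∀ j, j < ii → x' j = x j) ∧ hash h (x' ii) = v)
          then p x * p x' / margLt ii x else 0) := by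
    intro x
    by_cases hc : (∀ j : Fin T, (j:ℕ) < (ii:ℕ) → hash h (x j) = y j)
    · rw [if_pos hc, aux_rho2 hash p margLeVal hmargLeVal ii h x v]
      have : p x * ((∑ x', if ((∀ j, j < ii → x' j = x j) ∧ hash h (x' ii) = v) then p x' else 0) / margLt ii x)
          = ∑ x', (if ((∀ j, j < ii → x' j = x j) ∧ hash h (x' ii) = v) then p x' else 0) * (p x / margLt ii x) := by
        rw [← Finset.sum_mul]; ring
      rw [this]
      refine Finset.sum_congr rfl (fun x' _ => ?_)
      have hiff : ((∀ j : Fin T, (j:ℕ) < (ii:ℕ) → hash h (x j) = y j)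
          ∧ (∀ j, j < ii → x' j = x j) ∧ hash h (x' ii) = v)
          ↔ ((∀ j, j < ii → x' j = x j) ∧ hash h (x' ii) = v) :=
        ⟨And.right, fun hh => ⟨hc, hh⟩⟩
      rw [if_congr hiff rfl rfl]
      split_ifs with hbc <;> ring
    · rw [if_neg hc]
      exact (Finset.sum_eq_zero (fun x' _ => if_neg (fun hh => hc hh.1))).symm
  rw [Finset.sum_congr rfl (fun x _ => step1 x), Finset.sum_comm]
  unfold Afun
  refine Finset.sum_congr rfl (fun x' _ => ?_)
  by_cases hhv : hash h (x' ii) = v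
  · by_cases hw' : margLt ii x' = 0
    · have hp' : p x' = 0 :=
        le_antisymm (hw' ▸ (aux_wfacts p hp0 margLt hmargLt ii x').2) (hp0 x')
      rw [hp', ite_self]
      refine (Finset.sum_eq_zero (fun x _ => ?_)).symm
      split_ifs with hc
      · ring
      · rfl
    · have hwpos : 0 < margLt ii x' :=
        lt_of_le_of_ne (aux_wfacts p hp0 margLt hmargLt ii x').1 (Ne.symm hw')
      have perx : ∀ x, (if ((∀ j : Fin T, (j:ℕ) < (ii:ℕ) → hash h (x j) = y j)
            ∧ (∀ j, j < ii → x' j = x j) ∧ hash h (x' ii) = v)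
          then p x * p x' / margLt ii x else 0)
          = (if (∀ j, j < ii → x' j = x j)
              then (if (∀ j : Fin T, (j:ℕ) < (ii:ℕ) → hash h (x' j) = y j)
                then p x * (p x' / margLt ii x') else 0) else 0) := by
        intro x
        by_cases hagree : (∀ j, j < ii → x' j = x j)
        · have hwx : margLt ii x = margLt ii x' := aux_winv p margLt hmargLt ii x x' hagree
          have hcx : (∀ j : Fin T, (j:ℕ) < (ii:ℕ) → hash h (x j) = y j)
              ↔ (∀ j : Fin T, (j:ℕ) < (ii:ℕ) → hash h (x' j) = y j) := by
            constructor
            · intro hc j hj; rw [hagree j hj]; exact hc j hj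
            · intro hc j hj; rw [← hagree j hj]; exact hc j hj
          have hiff2 : ((∀ j : Fin T, (j:ℕ) < (ii:ℕ) → hash h (x j) = y j)
              ∧ (∀ j, j < ii → x' j = x j) ∧ hash h (x' ii) = v)
              ↔ (∀ j : Fin T, (j:ℕ) < (ii:ℕ) → hash h (x' j) = y j) :=
            ⟨fun hh => hcx.1 hh.1, fun hh => ⟨hcx.2 hh, hagree, hhv⟩⟩
          rw [if_pos hagree, if_congr hiff2 rfl rfl]
          split_ifs with c
          · rw [hwx]; ring
          · rfl
        · rw [if_neg hagree, if_neg (fun hh => hagree hh.2.1)]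
      rw [Finset.sum_congr rfl (fun x _ => perx x)]
      by_cases hcx' : (∀ j : Fin T, (j:ℕ) < (ii:ℕ) → hash h (x' j) = y j)
      · have inner : ∀ x, (if (∀ j, j < ii → x' j = x j)
              then (if (∀ j : Fin T, (j:ℕ) < (ii:ℕ) → hash h (x' j) = y j)
                then p x * (p x' / margLt ii x') else 0) else 0)
            = (if (∀ j, j < ii → x' j = x j) then p x else 0) * (p x' / margLt ii x') := by
          intro x
          rw [if_pos hcx']
          split_ifs <;> ring
        rw [Finset.sum_congr rfl (fun x _ => inner x), ← Finset.sum_mul]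
        have hsum : ∑ x, (if (∀ j, j < ii → x' j = x j) then p x else 0) = margLt ii x' := by
          rw [hmargLt]
          refine Finset.sum_congr rfl (fun x _ => ?_)
          refine if_congr ?_ rfl rfl
          constructor
          · intro hc j hj; exact (hc j hj).symm
          · intro hc j hj; exact (hc j hj).symm
        rw [hsum, if_pos ⟨hcx', hhv⟩]
        field_simp
      · have inner : ∀ x, (if (∀ j, j < ii → x' j = x j)
              then (if (∀ j : Fin T, (j:ℕ) < (ii:ℕ) → hash h (x' j) = y j)
                then p x * (p x' / margLt ii x') else 0) else 0) = 0 := by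
          intro x
          split_ifs <;> first | rfl | (exfalso; tauto)
        rw [Finset.sum_congr rfl (fun x _ => inner x), Finset.sum_const, smul_zero,
          if_neg (fun hh => hcx' hh.1)]
  · rw [if_neg (fun hh => hhv hh.2)]
    refine (Finset.sum_eq_zero (fun x _ => if_neg (fun hh => hhv hh.2.2))).symm

end arep
section cs
set_option linter.unusedSectionVars false
variable {N M T : ℕ} {Hfam : Type} [Fintype Hfam]

lemma aux_CS (hash : Hfam → Fin N → Fin M) (p : (Fin T → Fin N) → ℝ) (hp0 : ∀ x, 0 ≤ p x)
    (margLt : Fin T → (Fin T → Fin N) → ℝ)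
    (hmargLt : ∀ i x, margLt i x =
      ∑ y, if (∀ j, j < i → y j = x j) then p y else 0)
    (margLeVal : Fin T → (Fin T → Fin N) → Fin N → ℝ)
    (hmargLeVal : ∀ i x v, margLeVal i x v =
      ∑ y, if (∀ j, j < i → y j = x j) ∧ y i = v then p y else 0)
    (ii : Fin T) (h : Hfam) (y : Fin T → Fin M) (v : Fin M) :
    (Afun hash p ii h y v)^2
      ≤ Gfun hash p (ii:ℕ) h y *
        ∑ x, (if (∀ j : Fin T, (j:ℕ) < (ii:ℕ) → hash h (x j) = y j) then p x else 0)
          * ((∑ a, if hash h a = v then margLeVal ii x a else 0) / margLt ii x)^2 := by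
  set f : (Fin T → Fin N) → ℝ :=
    fun x => Real.sqrt (if (∀ j : Fin T, (j:ℕ) < (ii:ℕ) → hash h (x j) = y j) then p x else 0)
    with hf
  set g : (Fin T → Fin N) → ℝ :=
    fun x => f x * ((∑ a, if hash h a = v then margLeVal ii x a else 0) / margLt ii x)
    with hg
  have hite_nn : ∀ x, 0 ≤ (if (∀ j : Fin T, (j:ℕ) < (ii:ℕ) → hash h (x j) = y j) then p x else 0) := by
    intro x; split_ifs
    · exact hp0 x
    · exact le_refl 0
  have hfg : ∑ x, f x * g x = Afun hash p ii h y v := by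
    rw [aux_Arep hash p hp0 margLt hmargLt margLeVal hmargLeVal ii h y v]
    refine Finset.sum_congr rfl (fun x _ => ?_)
    rw [hg, hf]
    dsimp only
    rw [← mul_assoc, Real.mul_self_sqrt (hite_nn x)]
    split_ifs <;> ring
  have hf2 : ∑ x, (f x)^2 = Gfun hash p (ii:ℕ) h y := by
    unfold Gfun
    refine Finset.sum_congr rfl (fun x _ => ?_)
    rw [hf]
    exact Real.sq_sqrt (hite_nn x)
  have hg2 : ∀ x, (g x)^2 = (if (∀ j : Fin T, (j:ℕ) < (ii:ℕ) → hash h (x j) = y j) then p x else 0)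
      * ((∑ a, if hash h a = v then margLeVal ii x a else 0) / margLt ii x)^2 := by
    intro x
    rw [hg]
    dsimp only
    rw [mul_pow, Real.sq_sqrt (hite_nn x)]
  have := Finset.sum_mul_sq_le_sq_mul_sq Finset.univ f g
  rw [hfg, hf2] at this
  calc (Afun hash p ii h y v)^2 ≤ Gfun hash p (ii:ℕ) h y * ∑ x, (g x)^2 := this
    _ = _ := by rw [Finset.sum_congr rfl (fun x _ => hg2 x)]

lemma aux_term (hash : Hfam → Fin N → Fin M) (p : (Fin T → Fin N) → ℝ) (hp0 : ∀ x, 0 ≤ p x)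
    (margLt : Fin T → (Fin T → Fin N) → ℝ)
    (hmargLt : ∀ i x, margLt i x =
      ∑ y, if (∀ j, j < i → y j = x j) then p y else 0)
    (margLeVal : Fin T → (Fin T → Fin N) → Fin N → ℝ)
    (hmargLeVal : ∀ i x v, margLeVal i x v =
      ∑ y, if (∀ j, j < i → y j = x j) ∧ y i = v then p y else 0)
    (ii : Fin T) (h : Hfam) (y : Fin T → Fin M) :
    ((M:ℝ) * ∑ v, (Afun hash p ii h y v)^2) / Gfun hash p (ii:ℕ) h y
      ≤ (M:ℝ) * ∑ x, (if (∀ j : Fin T, (j:ℕ) < (ii:ℕ) → hash h (x j) = y j) then p x else 0)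
          * ((∑ v, (∑ a, if hash h a = v then margLeVal ii x a else 0)^2) / (margLt ii x)^2) := by
  have hite_nn : ∀ x, 0 ≤ (if (∀ j : Fin T, (j:ℕ) < (ii:ℕ) → hash h (x j) = y j) then p x else 0) := by
    intro x; split_ifs
    · exact hp0 x
    · exact le_refl 0
  have hRHS_nn : 0 ≤ ∑ x, (if (∀ j : Fin T, (j:ℕ) < (ii:ℕ) → hash h (x j) = y j) then p x else 0)
      * ((∑ v, (∑ a, if hash h a = v then margLeVal ii x a else 0)^2) / (margLt ii x)^2) := by
    refine Finset.sum_nonneg (fun x _ => mul_nonneg (hite_nn x) ?_)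
    apply div_nonneg
    · exact Finset.sum_nonneg (fun v _ => sq_nonneg _)
    · exact sq_nonneg _
  by_cases hG : Gfun hash p (ii:ℕ) h y = 0
  · have hA0 : ∀ v, Afun hash p ii h y v = 0 := by
      have hsum : ∑ v, Afun hash p ii h y v = 0 := by rw [Afun_sum hash p ii h y, hG]
      intro v
      exact le_antisymm
        (hsum ▸ Finset.single_le_sum (fun v' _ => Afun_nonneg hash p hp0 ii h y v') (Finset.mem_univ v))
        (Afun_nonneg hash p hp0 ii h y v)
    have : ∑ v, (Afun hash p ii h y v)^2 = 0 :=
      Finset.sum_eq_zero (fun v _ => by rw [hA0 v]; ring)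
    rw [this, mul_zero, zero_div]
    positivity
  · have hGpos : 0 < Gfun hash p (ii:ℕ) h y :=
      lt_of_le_of_ne (Gfun_nonneg hash p hp0 (ii:ℕ) h y) (Ne.symm hG)
    have h1 : ∑ v, (Afun hash p ii h y v)^2
        ≤ Gfun hash p (ii:ℕ) h y
          * ∑ x, (if (∀ j : Fin T, (j:ℕ) < (ii:ℕ) → hash h (x j) = y j) then p x else 0)
            * ((∑ v, (∑ a, if hash h a = v then margLeVal ii x a else 0)^2) / (margLt ii x)^2) := by
      calc ∑ v, (Afun hash p ii h y v)^2
          ≤ ∑ v, Gfun hash p (ii:ℕ) h y *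
              ∑ x, (if (∀ j : Fin T, (j:ℕ) < (ii:ℕ) → hash h (x j) = y j) then p x else 0)
                * ((∑ a, if hash h a = v then margLeVal ii x a else 0) / margLt ii x)^2 :=
            Finset.sum_le_sum (fun v _ =>
              aux_CS hash p hp0 margLt hmargLt margLeVal hmargLeVal ii h y v)
        _ = Gfun hash p (ii:ℕ) h y * ∑ v, ∑ x,
              (if (∀ j : Fin T, (j:ℕ) < (ii:ℕ) → hash h (x j) = y j) then p x else 0)
                * ((∑ a, if hash h a = v then margLeVal ii x a else 0) / margLt ii x)^2 := by
            rw [Finset.mul_sum]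
        _ = _ := by
            rw [Finset.sum_comm]
            congr 1
            refine Finset.sum_congr rfl (fun x _ => ?_)
            rw [← Finset.mul_sum]
            congr 1
            rw [Finset.sum_div]
            refine Finset.sum_congr rfl (fun v _ => ?_)
            rw [div_pow]
    rw [div_le_iff₀ hGpos]
    calc (M:ℝ) * ∑ v, (Afun hash p ii h y v)^2
        ≤ (M:ℝ) * (Gfun hash p (ii:ℕ) h y
          * ∑ x, (if (∀ j : Fin T, (j:ℕ) < (ii:ℕ) → hash h (x j) = y j) then p x else 0)
            * ((∑ v, (∑ a, if hash h a = v then margLeVal ii x a else 0)^2) / (margLt ii x)^2)) :=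
          mul_le_mul_of_nonneg_left h1 (by positivity)
      _ = _ := by ring

end cs
section step
set_option linter.unusedSectionVars false
variable {N M T : ℕ} {Hfam : Type} [Fintype Hfam] [Nonempty Hfam]

lemma aux_msum (p : (Fin T → Fin N) → ℝ)
    (margLt : Fin T → (Fin T → Fin N) → ℝ)
    (hmargLt : ∀ i x, margLt i x =
      ∑ y, if (∀ j, j < i → y j = x j) then p y else 0)
    (margLeVal : Fin T → (Fin T → Fin N) → Fin N → ℝ)
    (hmargLeVal : ∀ i x v, margLeVal i x v =
      ∑ y, if (∀ j, j < i → y j = x j) ∧ y i = v then p y else 0)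
    (ii : Fin T) (x : Fin T → Fin N) :
    ∑ a, margLeVal ii x a = margLt ii x := by
  rw [hmargLt, Finset.sum_congr rfl (fun a (_ : a ∈ Finset.univ) => hmargLeVal ii x a),
    Finset.sum_comm]
  refine Finset.sum_congr rfl (fun y _ => ?_)
  by_cases hpre : (∀ j, j < ii → y j = x j)
  · rw [Finset.sum_congr rfl (fun a (_ : a ∈ Finset.univ) =>
      if_congr (and_iff_right hpre) rfl rfl),
      Finset.sum_ite_eq Finset.univ (y ii) (fun _ => p y), if_pos hpre]
    simp
  · rw [if_neg hpre]
    exact Finset.sum_eq_zero (fun a _ => if_neg (fun hh => hpre hh.1))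

lemma aux_step (hash : Hfam → Fin N → Fin M)
    (huniv : ∀ x x' : Fin N, x ≠ x' →
      (∑ hh : Hfam, if hash hh x = hash hh x' then (1 : ℝ) else 0)
        / Fintype.card Hfam ≤ 1 / M)
    (p : (Fin T → Fin N) → ℝ) (hp0 : ∀ x, 0 ≤ p x) (hp1 : ∑ x, p x = 1)
    (margLt : Fin T → (Fin T → Fin N) → ℝ)
    (hmargLt : ∀ i x, margLt i x =
      ∑ y, if (∀ j, j < i → y j = x j) then p y else 0)
    (margLeVal : Fin T → (Fin T → Fin N) → Fin N → ℝ)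
    (hmargLeVal : ∀ i x v, margLeVal i x v =
      ∑ y, if (∀ j, j < i → y j = x j) ∧ y i = v then p y else 0)
    (hblock : ∀ i x, margLt i x ≠ 0 →
      (∑ v, (margLeVal i x v) ^ 2) / (margLt i x) ^ 2 ≤ 1 / K)
    (hK0 : (0:ℝ) < K) (hM : 0 < M)
    (i : ℕ) (hi : i < T) :
    (M:ℝ) * (∑ h : Hfam, ∑ y : Fin T → Fin M,
        Gfun hash p (i+1) h y * Real.log (Gfun hash p (i+1) h y))
      ≤ (∑ h : Hfam, ∑ y : Fin T → Fin M,
          Gfun hash p i h y * Real.log (Gfun hash p i h y))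
        - Real.log M * ((Fintype.card Hfam : ℝ) * (M:ℝ)^(T-i))
        + (Fintype.card Hfam : ℝ) * (M:ℝ)^(T-i) * ((M:ℝ)/K) := by
  have hDpos : (0:ℝ) < Fintype.card Hfam := by
    have := Fintype.card_pos (α := Hfam)
    exact_mod_cast this
  set ii : Fin T := ⟨i, hi⟩ with hii
  set Dr : ℝ := (Fintype.card Hfam : ℝ) with hDr
  set C : ℝ := (M:ℝ)^(T-i) with hC
  set PhiF : Hfam → (Fin T → Fin N) → ℝ :=
    fun h x => (∑ v : Fin M, (∑ a, if hash h a = v then margLeVal ii x a else 0)^2)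
      / (margLt ii x)^2 with hPhiF
  have hPhiF_nn : ∀ h x, 0 ≤ PhiF h x := by
    intro h x
    apply div_nonneg
    · exact Finset.sum_nonneg (fun v _ => sq_nonneg _)
    · exact sq_nonneg _
  have hm0 : ∀ x a, 0 ≤ margLeVal ii x a := by
    intro x a
    rw [hmargLeVal]
    refine Finset.sum_nonneg (fun y _ => ?_)
    split_ifs
    · exact hp0 y
    · exact le_refl 0
  have hphi : ∀ x, ∑ h : Hfam, PhiF h x ≤ Dr * (1/K + 1/M) :=
    fun x => aux_phi hash huniv hDpos hM K hK0 (fun a => margLeVal ii x a) (hm0 x)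
      (margLt ii x) (aux_msum p margLt hmargLt margLeVal hmargLeVal ii x)
      (hblock ii x)
  -- step (a): rewrite LHS
  have lhs_eq : (M:ℝ) * (∑ h : Hfam, ∑ y : Fin T → Fin M,
      Gfun hash p (i+1) h y * Real.log (Gfun hash p (i+1) h y))
      = ∑ h : Hfam, ∑ y : Fin T → Fin M, ∑ v : Fin M,
          Afun hash p ii h y v * Real.log (Afun hash p ii h y v) := by
    rw [Finset.mul_sum]
    exact Finset.sum_congr rfl (fun h _ => aux_MS hash p ii h)
  -- step (b): pointwise log-sum bound
  have key1 : ∀ (h : Hfam) (y : Fin T → Fin M),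
      ∑ v : Fin M, Afun hash p ii h y v * Real.log (Afun hash p ii h y v)
      ≤ Gfun hash p i h y * Real.log (Gfun hash p i h y)
        - Gfun hash p i h y * Real.log M - Gfun hash p i h y
        + ((M:ℝ) * ∑ v, (Afun hash p ii h y v)^2) / Gfun hash p i h y := by
    intro h y
    by_cases hG : Gfun hash p i h y = 0
    · have hA0 : ∀ v, Afun hash p ii h y v = 0 := by
        have hsum : ∑ v, Afun hash p ii h y v = 0 := by rw [Afun_sum hash p ii h y]; exact hG
        intro v
        exact le_antisymm
          (hsum ▸ Finset.single_le_sum (fun v' _ => Afun_nonneg hash p hp0 ii h y v')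
            (Finset.mem_univ v))
          (Afun_nonneg hash p hp0 ii h y v)
      have hL : ∑ v : Fin M, Afun hash p ii h y v * Real.log (Afun hash p ii h y v) = 0 :=
        Finset.sum_eq_zero (fun v _ => by rw [hA0 v]; ring)
      have hsq : ∑ v, (Afun hash p ii h y v)^2 = 0 :=
        Finset.sum_eq_zero (fun v _ => by rw [hA0 v]; ring)
      rw [hL, hG, hsq]
      simp
    · have hGpos : 0 < Gfun hash p i h y :=
        lt_of_le_of_ne (Gfun_nonneg hash p hp0 i h y) (Ne.symm hG)
      have hBpos : 0 < ∑ v, Afun hash p ii h y v := by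
        rw [Afun_sum hash p ii h y]; exact hGpos
      have := aux_logsum (fun v => Afun hash p ii h y v)
        (fun v => Afun_nonneg hash p hp0 ii h y v) hBpos
      rw [Afun_sum hash p ii h y] at this
      exact this
  -- step (c): the division bound
  have key2 : ∀ (h : Hfam) (y : Fin T → Fin M),
      ((M:ℝ) * ∑ v, (Afun hash p ii h y v)^2) / Gfun hash p i h y
      ≤ (M:ℝ) * ∑ x, (if (∀ j : Fin T, (j:ℕ) < i → hash h (x j) = y j) then p x else 0)
          * PhiF h x :=
    fun h y => aux_term hash p hp0 margLt hmargLt margLeVal hmargLeVal ii h y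
  have combine : ∀ (h : Hfam) (y : Fin T → Fin M),
      ∑ v : Fin M, Afun hash p ii h y v * Real.log (Afun hash p ii h y v)
      ≤ Gfun hash p i h y * Real.log (Gfun hash p i h y)
        - Gfun hash p i h y * Real.log M - Gfun hash p i h y
        + (M:ℝ) * ∑ x, (if (∀ j : Fin T, (j:ℕ) < i → hash h (x j) = y j) then p x else 0)
            * PhiF h x := by
    intro h y
    have := key1 h y
    have h2 := key2 h y
    linarith
  -- counting facts
  have hGsumy : ∀ h : Hfam, ∑ y : Fin T → Fin M, Gfun hash p i h y = C :=
    fun h => Gfun_sum hash p hp1 i hi.le h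
  have hWsum : ∀ h : Hfam,
      ∑ y : Fin T → Fin M, ∑ x, (if (∀ j : Fin T, (j:ℕ) < i → hash h (x j) = y j)
          then p x else 0) * PhiF h x
      = C * ∑ x, p x * PhiF h x := by
    intro h
    rw [Finset.sum_comm]
    have perx : ∀ x, ∑ y : Fin T → Fin M,
        (if (∀ j : Fin T, (j:ℕ) < i → hash h (x j) = y j) then p x else 0) * PhiF h x
        = C * (p x * PhiF h x) := by
      intro x
      have h1 : ∀ y : Fin T → Fin M,
          (if (∀ j : Fin T, (j:ℕ) < i → hash h (x j) = y j) then p x else 0) * PhiF h x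
          = (p x * PhiF h x) * (if (∀ j : Fin T, (j:ℕ) < i → hash h (x j) = y j)
              then (1:ℝ) else 0) := by
        intro y; split_ifs <;> ring
      rw [Finset.sum_congr rfl (fun y _ => h1 y), ← Finset.mul_sum,
        aux_cnt i hi.le (fun j => hash h (x j))]
      ring
    rw [Finset.sum_congr rfl (fun x _ => perx x), ← Finset.mul_sum]
  have hPhiSum : ∑ h : Hfam, ∑ x, p x * PhiF h x ≤ Dr * (1/K + 1/M) := by
    rw [Finset.sum_comm]
    calc ∑ x, ∑ h : Hfam, p x * PhiF h x
        = ∑ x, p x * ∑ h : Hfam, PhiF h x := by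
          exact Finset.sum_congr rfl (fun x _ => by rw [Finset.mul_sum])
      _ ≤ ∑ x, p x * (Dr * (1/K + 1/M)) :=
          Finset.sum_le_sum (fun x _ => mul_le_mul_of_nonneg_left (hphi x) (hp0 x))
      _ = (∑ x, p x) * (Dr * (1/K + 1/M)) := by rw [← Finset.sum_mul]
      _ = Dr * (1/K + 1/M) := by rw [hp1, one_mul]
  -- put it together
  have main : (M:ℝ) * (∑ h : Hfam, ∑ y : Fin T → Fin M,
      Gfun hash p (i+1) h y * Real.log (Gfun hash p (i+1) h y))
      ≤ (∑ h : Hfam, ∑ y : Fin T → Fin M,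
          Gfun hash p i h y * Real.log (Gfun hash p i h y))
        - Real.log M * (Dr * C) - Dr * C + (M:ℝ) * (C * (Dr * (1/K + 1/M))) := by
    rw [lhs_eq]
    have hsle : ∑ h : Hfam, ∑ y : Fin T → Fin M, (∑ v : Fin M,
        Afun hash p ii h y v * Real.log (Afun hash p ii h y v))
        ≤ ∑ h : Hfam, ∑ y : Fin T → Fin M,
          (Gfun hash p i h y * Real.log (Gfun hash p i h y)
            - Gfun hash p i h y * Real.log M - Gfun hash p i h y
            + (M:ℝ) * ∑ x, (if (∀ j : Fin T, (j:ℕ) < i → hash h (x j) = y j)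
                then p x else 0) * PhiF h x) :=
      Finset.sum_le_sum (fun h _ => Finset.sum_le_sum (fun y _ => combine h y))
    have hsplit : ∑ h : Hfam, ∑ y : Fin T → Fin M,
        (Gfun hash p i h y * Real.log (Gfun hash p i h y)
          - Gfun hash p i h y * Real.log M - Gfun hash p i h y
          + (M:ℝ) * ∑ x, (if (∀ j : Fin T, (j:ℕ) < i → hash h (x j) = y j)
              then p x else 0) * PhiF h x)
        = (∑ h : Hfam, ∑ y : Fin T → Fin M, Gfun hash p i h y * Real.log (Gfun hash p i h y))
          - Real.log M * (Dr * C) - Dr * C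
          + (M:ℝ) * ∑ h : Hfam, (∑ y : Fin T → Fin M,
              ∑ x, (if (∀ j : Fin T, (j:ℕ) < i → hash h (x j) = y j)
                then p x else 0) * PhiF h x) := by
      simp only [Finset.sum_add_distrib, Finset.sum_sub_distrib, ← Finset.mul_sum]
      have e1 : ∑ h : Hfam, ∑ y : Fin T → Fin M, Gfun hash p i h y * Real.log M
          = Real.log M * (Dr * C) := by
        have e1a : ∀ h : Hfam, ∑ y : Fin T → Fin M, Gfun hash p i h y * Real.log M
            = C * Real.log M := fun h => by rw [← Finset.sum_mul, hGsumy h]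
        rw [Finset.sum_congr rfl (fun h (_ : h ∈ Finset.univ) => e1a h),
          Finset.sum_const, Finset.card_univ, nsmul_eq_mul]
        ring
      have e2 : ∑ h : Hfam, ∑ y : Fin T → Fin M, Gfun hash p i h y = Dr * C := by
        rw [Finset.sum_congr rfl (fun h (_ : h ∈ Finset.univ) => hGsumy h),
          Finset.sum_const, Finset.card_univ, nsmul_eq_mul]
      rw [e1, e2]
    have hlast : (M:ℝ) * ∑ h : Hfam, (∑ y : Fin T → Fin M,
        ∑ x, (if (∀ j : Fin T, (j:ℕ) < i → hash h (x j) = y j)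
          then p x else 0) * PhiF h x)
        ≤ (M:ℝ) * (C * (Dr * (1/K + 1/M))) := by
      have h3 : ∑ h : Hfam, (∑ y : Fin T → Fin M,
          ∑ x, (if (∀ j : Fin T, (j:ℕ) < i → hash h (x j) = y j)
            then p x else 0) * PhiF h x)
          = C * ∑ h : Hfam, ∑ x, p x * PhiF h x := by
        rw [Finset.sum_congr rfl (fun h (_ : h ∈ Finset.univ) => hWsum h), ← Finset.mul_sum]
      rw [h3]
      have hCpos : 0 ≤ C := by rw [hC]; positivity
      have := mul_le_mul_of_nonneg_left hPhiSum hCpos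
      exact mul_le_mul_of_nonneg_left this (by positivity)
    calc ∑ h : Hfam, ∑ y : Fin T → Fin M, (∑ v : Fin M,
        Afun hash p ii h y v * Real.log (Afun hash p ii h y v))
        ≤ _ := hsle
      _ = _ := hsplit
      _ ≤ _ := by linarith [hlast]
  have hfinal : (M:ℝ) * (C * (Dr * (1/K + 1/M))) = Dr * C * ((M:ℝ)/K) + Dr * C := by
    field_simp
  linarith [main, hfinal.le, hfinal.ge]
end step
lemma aux_sd {Ω : Type} [Fintype Ω] (P Q : Ω → ℝ) (hP : ∀ z, 0 ≤ P z) (hQ : ∀ z, 0 < Q z)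
    (hP1 : ∑ z, P z = 1) (hQ1 : ∑ z, Q z = 1) (B : ℝ)
    (hB : ∑ z, (P z * Real.log (P z / Q z) - P z + Q z) ≤ B) (hB' : 0 ≤ B) :
    ∑ z, |P z - Q z| ≤ 2 * Real.sqrt B := by
  have key : ∀ z, (Real.sqrt (P z) - Real.sqrt (Q z))^2
      ≤ P z * Real.log (P z / Q z) - P z + Q z := fun z => aux_log _ _ (hP z) (hQ z)
  have h1 : ∑ z, (Real.sqrt (P z) - Real.sqrt (Q z))^2 ≤ B :=
    le_trans (Finset.sum_le_sum (fun z _ => key z)) hB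
  have habs : ∀ z, |P z - Q z|
      = |Real.sqrt (P z) - Real.sqrt (Q z)| * (Real.sqrt (P z) + Real.sqrt (Q z)) := by
    intro z
    have hp2 : Real.sqrt (P z)^2 = P z := Real.sq_sqrt (hP z)
    have hq2 : Real.sqrt (Q z)^2 = Q z := Real.sq_sqrt (hQ z).le
    have hfac : P z - Q z = (Real.sqrt (P z) - Real.sqrt (Q z)) * (Real.sqrt (P z) + Real.sqrt (Q z)) := by
      nlinarith
    rw [hfac, abs_mul, abs_of_nonneg (by positivity : (0:ℝ) ≤ Real.sqrt (P z) + Real.sqrt (Q z))]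
  have hCS := Finset.sum_mul_sq_le_sq_mul_sq Finset.univ
    (fun z => |Real.sqrt (P z) - Real.sqrt (Q z)|)
    (fun z => Real.sqrt (P z) + Real.sqrt (Q z))
  have hF2 : ∑ z, |Real.sqrt (P z) - Real.sqrt (Q z)|^2
      = ∑ z, (Real.sqrt (P z) - Real.sqrt (Q z))^2 :=
    Finset.sum_congr rfl (fun z _ => sq_abs _)
  have hG2 : ∑ z, (Real.sqrt (P z) + Real.sqrt (Q z))^2 ≤ 4 := by
    have hper : ∀ z, (Real.sqrt (P z) + Real.sqrt (Q z))^2 ≤ 2*(P z + Q z) := by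
      intro z
      have hp2 : Real.sqrt (P z)^2 = P z := Real.sq_sqrt (hP z)
      have hq2 : Real.sqrt (Q z)^2 = Q z := Real.sq_sqrt (hQ z).le
      nlinarith [sq_nonneg (Real.sqrt (P z) - Real.sqrt (Q z))]
    calc ∑ z, (Real.sqrt (P z) + Real.sqrt (Q z))^2 ≤ ∑ z, 2*(P z + Q z) :=
          Finset.sum_le_sum (fun z _ => hper z)
      _ = 4 := by
          rw [Finset.sum_congr rfl (fun z (_ : z ∈ Finset.univ) => mul_add 2 (P z) (Q z)),
            Finset.sum_add_distrib, ← Finset.mul_sum, ← Finset.mul_sum, hP1, hQ1]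
          norm_num
  have hL : ∑ z, |P z - Q z| = ∑ z, |Real.sqrt (P z) - Real.sqrt (Q z)|
      * (Real.sqrt (P z) + Real.sqrt (Q z)) :=
    Finset.sum_congr rfl (fun z _ => habs z)
  have hLnn : 0 ≤ ∑ z, |P z - Q z| := Finset.sum_nonneg (fun z _ => abs_nonneg _)
  have hsq : (∑ z, |P z - Q z|)^2 ≤ B * 4 := by
    rw [hL]
    calc (∑ z, |Real.sqrt (P z) - Real.sqrt (Q z)| * (Real.sqrt (P z) + Real.sqrt (Q z)))^2
        ≤ (∑ z, |Real.sqrt (P z) - Real.sqrt (Q z)|^2)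
          * (∑ z, (Real.sqrt (P z) + Real.sqrt (Q z))^2) := hCS
      _ ≤ B * 4 := by
          rw [hF2]
          have h2 : 0 ≤ ∑ z, (Real.sqrt (P z) - Real.sqrt (Q z))^2 :=
            Finset.sum_nonneg (fun z _ => sq_nonneg _)
          have h3 : 0 ≤ ∑ z, (Real.sqrt (P z) + Real.sqrt (Q z))^2 :=
            Finset.sum_nonneg (fun z _ => sq_nonneg _)
          nlinarith
  have h2B : (2*Real.sqrt B)^2 = B * 4 := by
    rw [mul_pow, Real.sq_sqrt hB']; ring
  nlinarith [Real.sqrt_nonneg B, hsq, h2B]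
/-- Theorem 3: hashing a block `K`-source with a random
2-universal hash function yields a joint distribution `(H, H(X_1),...,H(X_T))`
that is `ε`-close to `(H, U_{[M]^T})`, provided `K > MT/ε²`. -/
theorem stmt8 {N M T : ℕ} {Hfam : Type} [Fintype Hfam] [Nonempty Hfam]
    (hash : Hfam → Fin N → Fin M)
    (huniv : ∀ x x' : Fin N, x ≠ x' →
      (∑ hh : Hfam, if hash hh x = hash hh x' then (1 : ℝ) else 0)
        / Fintype.card Hfam ≤ 1 / M)
    (p : (Fin T → Fin N) → ℝ) (hp0 : ∀ x, 0 ≤ p x) (hp1 : ∑ x, p x = 1)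
    (K ε : ℝ) (hε : 0 < ε)
    -- `margLt i x` = Pr[X_{<i} = x_{<i}]
    (margLt : Fin T → (Fin T → Fin N) → ℝ)
    (hmargLt : ∀ i x, margLt i x =
      ∑ y, if (∀ j, j < i → y j = x j) then p y else 0)
    -- `margLeVal i x v` = Pr[X_{<i} = x_{<i} ∧ X_i = v]
    (margLeVal : Fin T → (Fin T → Fin N) → Fin N → ℝ)
    (hmargLeVal : ∀ i x v, margLeVal i x v =
      ∑ y, if (∀ j, j < i → y j = x j) ∧ y i = v then p y else 0)
    -- block `K`-source: conditional collision probability at most `1/K`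
    (hblock : ∀ i x, margLt i x ≠ 0 →
      (∑ v, (margLeVal i x v) ^ 2) / (margLt i x) ^ 2 ≤ 1 / K)
    (hK : M * T / ε ^ 2 < K) :
    (1 / 2 : ℝ) * ∑ hh : Hfam, ∑ y : Fin T → Fin M,
      |(1 / Fintype.card Hfam : ℝ) *
          (∑ x, if (∀ i, hash hh (x i) = y i) then p x else 0)
        - 1 / (Fintype.card Hfam * M ^ T)| ≤ ε := by
  have hDpos : (0:ℝ) < Fintype.card Hfam := by
    have := Fintype.card_pos (α := Hfam)
    exact_mod_cast this
  by_cases hM0 : M = 0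
  · subst hM0
    by_cases hT0 : T = 0
    · subst hT0
      have hy : ∀ hh : Hfam, ∑ y : Fin 0 → Fin 0,
          |(1 / Fintype.card Hfam : ℝ) *
            (∑ x : Fin 0 → Fin N, if (∀ i, hash hh (x i) = y i) then p x else 0)
          - 1 / (Fintype.card Hfam * (0:ℕ) ^ (0:ℕ))| = 0 := by
        intro hh
        rw [Fintype.sum_unique]
        have h1 : ∀ x : Fin 0 → Fin N,
            (if (∀ i, hash hh (x i) = (default : Fin 0 → Fin 0) i) then p x else 0) = p x :=
          fun x => if_pos (fun i => i.elim0)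
        rw [Finset.sum_congr rfl (fun x _ => h1 x), hp1]
        norm_num
      rw [Finset.sum_congr rfl (fun hh _ => hy hh), Finset.sum_const, smul_zero, mul_zero]
      exact hε.le
    · have hem : IsEmpty (Fin T → Fin 0) :=
        ⟨fun f => (f ⟨0, Nat.pos_of_ne_zero hT0⟩).elim0⟩
      have hy : ∀ hh : Hfam, ∑ y : Fin T → Fin 0,
          |(1 / Fintype.card Hfam : ℝ) *
            (∑ x : Fin T → Fin N, if (∀ i, hash hh (x i) = y i) then p x else 0)
          - 1 / (Fintype.card Hfam * (0:ℕ) ^ T)| = 0 := by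
        intro hh
        rw [Finset.univ_eq_empty, Finset.sum_empty]
      rw [Finset.sum_congr rfl (fun hh _ => hy hh), Finset.sum_const, smul_zero, mul_zero]
      exact hε.le
  -- main case
  have hM : 0 < M := Nat.pos_of_ne_zero hM0
  have hMr : (0:ℝ) < M := by exact_mod_cast hM
  have hK0 : (0:ℝ) < K := lt_of_le_of_lt (by positivity) hK
  -- inductive KL bound
  have KLbound : ∀ k, k ≤ T →
      (∑ h : Hfam, ∑ y : Fin T → Fin M, Gfun hash p k h y * Real.log (Gfun hash p k h y))
        / ((Fintype.card Hfam : ℝ) * (M:ℝ)^(T-k)) + (k:ℝ) * Real.log M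
      ≤ (k:ℝ) * ((M:ℝ)/K) := by
    intro k
    induction k with
    | zero =>
      intro _
      have hG0 : ∀ (h : Hfam) (y : Fin T → Fin M), Gfun hash p 0 h y = 1 := by
        intro h y
        unfold Gfun
        rw [Finset.sum_congr rfl
          (fun x _ => if_pos (fun j hj => absurd hj (Nat.not_lt_zero _)))]
        exact hp1
      have hS0 : ∑ h : Hfam, ∑ y : Fin T → Fin M,
          Gfun hash p 0 h y * Real.log (Gfun hash p 0 h y) = 0 :=
        Finset.sum_eq_zero (fun h _ => Finset.sum_eq_zero (fun y _ => by
          rw [hG0 h y, Real.log_one]; ring))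
      rw [hS0]
      simp
    | succ n ih =>
      intro hsc
      have hi : n < T := by omega
      have ihv := ih (by omega)
      have SB := aux_step hash huniv p hp0 hp1 margLt hmargLt margLeVal hmargLeVal hblock
        hK0 hM n hi
      have hTn : T - n = (T - (n+1)) + 1 := by omega
      rw [hTn] at SB ihv
      set e : ℕ := T - (n+1) with he
      set S2 : ℝ := ∑ h : Hfam, ∑ y : Fin T → Fin M,
        Gfun hash p (n+1) h y * Real.log (Gfun hash p (n+1) h y) with hS2
      set S1 : ℝ := ∑ h : Hfam, ∑ y : Fin T → Fin M,
        Gfun hash p n h y * Real.log (Gfun hash p n h y) with hS1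
      have hPM : (0:ℝ) < (Fintype.card Hfam : ℝ) * (M:ℝ)^(e+1) := by positivity
      have h2 : S2/((Fintype.card Hfam : ℝ)*(M:ℝ)^e)
          = ((M:ℝ)*S2)/((Fintype.card Hfam : ℝ)*(M:ℝ)^(e+1)) := by
        rw [pow_succ]
        field_simp
      have h3 : ((M:ℝ)*S2)/((Fintype.card Hfam : ℝ)*(M:ℝ)^(e+1))
          ≤ (S1 - Real.log M * ((Fintype.card Hfam : ℝ) * (M:ℝ)^(e+1))
              + (Fintype.card Hfam : ℝ) * (M:ℝ)^(e+1) * ((M:ℝ)/K))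
            /((Fintype.card Hfam : ℝ)*(M:ℝ)^(e+1)) :=
        (div_le_div_iff_of_pos_right hPM).2 SB
      have h4 : (S1 - Real.log M * ((Fintype.card Hfam : ℝ) * (M:ℝ)^(e+1))
              + (Fintype.card Hfam : ℝ) * (M:ℝ)^(e+1) * ((M:ℝ)/K))
            /((Fintype.card Hfam : ℝ)*(M:ℝ)^(e+1))
          = S1/((Fintype.card Hfam : ℝ)*(M:ℝ)^(e+1)) - Real.log M + (M:ℝ)/K := by
        field_simp
      have h5 : S2/((Fintype.card Hfam : ℝ)*(M:ℝ)^e)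
          ≤ S1/((Fintype.card Hfam : ℝ)*(M:ℝ)^(e+1)) - Real.log M + (M:ℝ)/K := by
        rw [h2]
        exact h3.trans_eq h4
      push_cast
      push_cast at ihv
      linarith [h5, ihv]
  -- rewrite the goal in flattened form
  have hcond : ∀ (hh : Hfam) (y : Fin T → Fin M),
      (∑ x, if (∀ i, hash hh (x i) = y i) then p x else 0) = Gfun hash p T hh y := by
    intro hh y
    unfold Gfun
    exact Finset.sum_congr rfl (fun x _ =>
      if_congr ⟨fun hc j _ => hc j, fun hc j => hc j j.2⟩ rfl rfl)
  have hGsumT : ∀ h : Hfam, ∑ y : Fin T → Fin M, Gfun hash p T h y = 1 := by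
    intro h
    have := Gfun_sum hash p hp1 T le_rfl h
    rwa [Nat.sub_self, pow_zero] at this
  have hP1 : ∑ z : Hfam × (Fin T → Fin M),
      Gfun hash p T z.1 z.2 / (Fintype.card Hfam : ℝ) = 1 := by
    rw [Fintype.sum_prod_type]
    have hper : ∀ h : Hfam, ∑ y : Fin T → Fin M,
        Gfun hash p T h y / (Fintype.card Hfam : ℝ) = 1/(Fintype.card Hfam : ℝ) := by
      intro h
      rw [← Finset.sum_div, hGsumT h]
    rw [Finset.sum_congr rfl (fun h _ => hper h), Finset.sum_const, Finset.card_univ,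
      nsmul_eq_mul]
    field_simp
  have hcardY : (Fintype.card (Fin T → Fin M) : ℝ) = (M:ℝ)^T := by
    rw [Fintype.card_fun]
    push_cast
    simp
  have hq0 : (0:ℝ) < 1 / (Fintype.card Hfam * (M:ℝ) ^ T) := by positivity
  have hQ1 : ∑ _z : Hfam × (Fin T → Fin M),
      (1 / (Fintype.card Hfam * (M:ℝ) ^ T) : ℝ) = 1 := by
    rw [Finset.sum_const, Finset.card_univ, nsmul_eq_mul, Fintype.card_prod]
    push_cast
    rw [hcardY]
    field_simp
  -- the KL identity
  have hKLid : ∑ z : Hfam × (Fin T → Fin M),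
      ((Gfun hash p T z.1 z.2 / (Fintype.card Hfam : ℝ))
          * Real.log ((Gfun hash p T z.1 z.2 / (Fintype.card Hfam : ℝ))
              / (1 / (Fintype.card Hfam * (M:ℝ) ^ T)))
        - Gfun hash p T z.1 z.2 / (Fintype.card Hfam : ℝ)
        + 1 / (Fintype.card Hfam * (M:ℝ) ^ T))
      = (∑ h : Hfam, ∑ y : Fin T → Fin M,
          Gfun hash p T h y * Real.log (Gfun hash p T h y))
          / ((Fintype.card Hfam : ℝ) * (M:ℝ)^(T-T)) + (T:ℝ) * Real.log M := by
    have hper : ∀ z : Hfam × (Fin T → Fin M),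
        (Gfun hash p T z.1 z.2 / (Fintype.card Hfam : ℝ))
          * Real.log ((Gfun hash p T z.1 z.2 / (Fintype.card Hfam : ℝ))
              / (1 / (Fintype.card Hfam * (M:ℝ) ^ T)))
        = (Gfun hash p T z.1 z.2 * Real.log (Gfun hash p T z.1 z.2))
            / (Fintype.card Hfam : ℝ)
          + (Gfun hash p T z.1 z.2 / (Fintype.card Hfam : ℝ)) * ((T:ℝ) * Real.log M) := by
      intro z
      by_cases hGz : Gfun hash p T z.1 z.2 = 0
      · rw [hGz]
        simp
      · have harg : (Gfun hash p T z.1 z.2 / (Fintype.card Hfam : ℝ))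
            / (1 / (Fintype.card Hfam * (M:ℝ) ^ T))
            = Gfun hash p T z.1 z.2 * (M:ℝ)^T := by
          have hDne : (Fintype.card Hfam : ℝ) ≠ 0 := ne_of_gt hDpos
          have hMTne : ((M:ℝ))^T ≠ 0 := by positivity
          field_simp
        rw [harg, Real.log_mul hGz (by positivity), Real.log_pow]
        field_simp
    rw [Finset.sum_congr rfl (fun z _ => by rw [hper z])]
    rw [Finset.sum_add_distrib, Finset.sum_sub_distrib, Finset.sum_add_distrib]
    rw [hP1, hQ1]
    have hA : ∑ z : Hfam × (Fin T → Fin M),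
        (Gfun hash p T z.1 z.2 * Real.log (Gfun hash p T z.1 z.2))
          / (Fintype.card Hfam : ℝ)
        = (∑ h : Hfam, ∑ y : Fin T → Fin M,
            Gfun hash p T h y * Real.log (Gfun hash p T h y)) / (Fintype.card Hfam : ℝ) := by
      rw [← Finset.sum_div, Fintype.sum_prod_type]
    have hBt : ∑ z : Hfam × (Fin T → Fin M),
        (Gfun hash p T z.1 z.2 / (Fintype.card Hfam : ℝ)) * ((T:ℝ) * Real.log M)
        = (T:ℝ) * Real.log M := by
      rw [← Finset.sum_mul, hP1, one_mul]
    rw [hA, hBt, Nat.sub_self, pow_zero, mul_one]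
    ring
  -- apply the statistical-distance/KL inequality
  have hBle : ∑ z : Hfam × (Fin T → Fin M),
      ((Gfun hash p T z.1 z.2 / (Fintype.card Hfam : ℝ))
          * Real.log ((Gfun hash p T z.1 z.2 / (Fintype.card Hfam : ℝ))
              / (1 / (Fintype.card Hfam * (M:ℝ) ^ T)))
        - Gfun hash p T z.1 z.2 / (Fintype.card Hfam : ℝ)
        + 1 / (Fintype.card Hfam * (M:ℝ) ^ T))
      ≤ (T:ℝ) * ((M:ℝ)/K) := by
    rw [hKLid]
    exact KLbound T le_rfl
  have hsd := aux_sd (fun z : Hfam × (Fin T → Fin M) => Gfun hash p T z.1 z.2 / (Fintype.card Hfam : ℝ))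
    (fun _ => (1 / (Fintype.card Hfam * (M:ℝ) ^ T) : ℝ))
    (fun z => div_nonneg (Gfun_nonneg hash p hp0 T z.1 z.2) hDpos.le)
    (fun _ => hq0) hP1 hQ1 ((T:ℝ) * ((M:ℝ)/K)) hBle (by positivity)
  have hsqrt : Real.sqrt ((T:ℝ)*((M:ℝ)/K)) ≤ ε := by
    have h1 : (T:ℝ)*((M:ℝ)/K) < ε^2 := by
      have h2 : (M:ℝ)*(T:ℝ) < K * ε^2 := by
        rw [div_lt_iff₀ (by positivity : (0:ℝ) < ε^2)] at hK
        exact hK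
      rw [show (T:ℝ)*((M:ℝ)/K) = ((M:ℝ)*(T:ℝ))/K by ring, div_lt_iff₀ hK0]
      linarith
    calc Real.sqrt ((T:ℝ)*((M:ℝ)/K)) ≤ Real.sqrt (ε^2) := Real.sqrt_le_sqrt h1.le
      _ = ε := Real.sqrt_sq hε.le
  have hflat : ∑ hh : Hfam, ∑ y : Fin T → Fin M,
      |(1 / Fintype.card Hfam : ℝ) *
          (∑ x, if (∀ i, hash hh (x i) = y i) then p x else 0)
        - 1 / (Fintype.card Hfam * M ^ T)|
      = ∑ z : Hfam × (Fin T → Fin M),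
        |Gfun hash p T z.1 z.2 / (Fintype.card Hfam : ℝ)
          - 1 / (Fintype.card Hfam * (M:ℝ) ^ T)| := by
    rw [Fintype.sum_prod_type]
    refine Finset.sum_congr rfl (fun hh _ => Finset.sum_congr rfl (fun y _ => ?_))
    rw [hcond hh y, one_div, inv_mul_eq_div]
  rw [hflat]
  linarith [hsd, Real.sqrt_nonneg ((T:ℝ)*((M:ℝ)/K))]
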